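/- For (a,b,c) ∈ ℝ³ let X_{a,b,c} : ℝ⁴ → ℝ⁴ be the linear map X(λ₁,λ₂,λ₃,λ₄) = (3aλ₁+bλ₂, 3cλ₁+aλ₂+2bλ₃, 2cλ₂−aλ₃+3bλ₄, cλ₃−3aλ₄), and let Π_{a,b,c} = {λ ∈ ℝ⁴ : λ₂ = λ₄ and 3cλ₁ + 4aλ₂ + (2b−c)λ₃ = 0}. Let Σ₃ ⊂ GL(2,ℝ) be the subgroup generated by the matrices [[−1/2, √3/2],[√3/2, 1/2]] and [[1,0],[0,−1]], and write A_{a,b,c} = [[a,b],[c,−a]]. Then for (a,b,c) ≠ (0,0,0) the following are equivalent: (1) X_{a,b,c}(Π_{a,b,c}) ⊆ Π_{a,b,c}; (2) there exist k ∈ Σ₃ and r ∈ ℝ with r ≠ 0 such that k·A_{a,b,c}·k⁻¹ equals r·A_{1,0,0}, r·A_{0,1,3} or r·A_{0,1,−1}. Moreover Π_{1,0,0} = {λ₂ = λ₄ = 0}, Π_{0,1,3} = {9λ₁ = λ₃, λ₂ = λ₄} and Π_{0,1,−1} = {λ₁ = λ₃, λ₂ = λ₄}. -/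
import Mathlib


noncomputable section

/-- The fundamental vector field `X_{a,b,c}` on the space `B³ ≅ ℝ⁴` of binary cubics. -/
def Xabc (a b c : ℝ) (l : Fin 4 → ℝ) : Fin 4 → ℝ :=
  ![3 * a * l 0 + b * l 1,
    3 * c * l 0 + a * l 1 + 2 * b * l 2,
    2 * c * l 1 - a * l 2 + 3 * b * l 3,
    c * l 2 - 3 * a * l 3]

/-- The plane `Π_{a,b,c}` of half-flat cubics fixed linearly by `X_{a,b,c}`. -/
def Pabc (a b c : ℝ) : Set (Fin 4 → ℝ) :=
  {l | l 1 = l 3 ∧ 3 * c * l 0 + 4 * a * l 1 + (2 * b - c) * l 2 = 0}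

/-- The matrix `A_{a,b,c} ∈ sl(2,ℝ)`. -/
def Amat (a b c : ℝ) : Matrix (Fin 2) (Fin 2) ℝ := !![a, b; c, -a]

/-- The first generator of `Σ₃ ⊂ GL(2,ℝ)`, the image of the transposition `(12)`. -/
def gen1 : GL (Fin 2) ℝ :=
  Matrix.GeneralLinearGroup.mkOfDetNeZero !![-1/2, Real.sqrt 3 / 2; Real.sqrt 3 / 2, 1/2]
    (by
      have h3 : Real.sqrt 3 * Real.sqrt 3 = 3 := Real.mul_self_sqrt (by norm_num)
      simp only [Matrix.det_fin_two_of]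
      nlinarith [h3])

/-- The second generator of `Σ₃ ⊂ GL(2,ℝ)`, the image of the transposition `(23)`. -/
def gen2 : GL (Fin 2) ℝ :=
  Matrix.GeneralLinearGroup.mkOfDetNeZero !![1, 0; 0, -1]
    (by norm_num [Matrix.det_fin_two_of])

/-- The copy of the symmetric group `Σ₃` inside `GL(2,ℝ)` generated by `gen1` and `gen2`. -/
def Sigma3 : Subgroup (GL (Fin 2) ℝ) := Subgroup.closure {gen1, gen2}

/-! ### Auxiliary development -/

/-- The polynomial conditions equivalent to `X(Π) ⊆ Π`. -/
def PC (a b c : ℝ) : Prop :=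
  c * (12*a^2 - 3*b^2 - 2*b*c + c^2) = 0 ∧
  a * c * (b - c) = 0 ∧
  4*a^2*(2*b+c) - (3*b-c)*(b+c)*(2*b-c) = 0

lemma hs3 : Real.sqrt 3 * Real.sqrt 3 = 3 := Real.mul_self_sqrt (by norm_num)

lemma conj_eq (k : GL (Fin 2) ℝ) {M N : Matrix (Fin 2) (Fin 2) ℝ}
    (h : (k : Matrix (Fin 2) (Fin 2) ℝ) * M = N * (k : Matrix (Fin 2) (Fin 2) ℝ)) :
    (k : Matrix (Fin 2) (Fin 2) ℝ) * M * ((k⁻¹ : GL (Fin 2) ℝ) : Matrix (Fin 2) (Fin 2) ℝ) = N := by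
  have h1 : (k : Matrix (Fin 2) (Fin 2) ℝ) * ((k⁻¹ : GL (Fin 2) ℝ) : Matrix (Fin 2) (Fin 2) ℝ) = 1 := by
    rw [← Units.val_mul, mul_inv_cancel, Units.val_one]
  rw [h, mul_assoc, h1, mul_one]

lemma conj_gen1 (a b c : ℝ) :
    (gen1 : Matrix (Fin 2) (Fin 2) ℝ) * Amat a b c *
        ((gen1⁻¹ : GL (Fin 2) ℝ) : Matrix (Fin 2) (Fin 2) ℝ) =
      Amat (-a/2 - Real.sqrt 3*(b+c)/4) (-a*Real.sqrt 3/2 - b/4 + 3*c/4)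
        (-a*Real.sqrt 3/2 + 3*b/4 - c/4) := by
  apply conj_eq
  have h3 := hs3
  have hg1 : (gen1 : Matrix (Fin 2) (Fin 2) ℝ)
      = !![-1/2, Real.sqrt 3 / 2; Real.sqrt 3 / 2, 1/2] := rfl
  rw [hg1]
  ext i j
  fin_cases i <;> fin_cases j <;>
    simp [Amat, Matrix.mul_apply, Fin.sum_univ_two]
  · linear_combination (a/4) * h3
  · linear_combination ((b+c)/8) * h3
  · linear_combination (-(b+c)/8) * h3
  · linear_combination (a/4) * h3

lemma conj_gen2 (a b c : ℝ) :
    (gen2 : Matrix (Fin 2) (Fin 2) ℝ) * Amat a b c *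
        ((gen2⁻¹ : GL (Fin 2) ℝ) : Matrix (Fin 2) (Fin 2) ℝ) = Amat a (-b) (-c) := by
  apply conj_eq
  have hg2 : (gen2 : Matrix (Fin 2) (Fin 2) ℝ) = !![1, 0; 0, -1] := rfl
  rw [hg2]
  ext i j
  fin_cases i <;> fin_cases j <;>
    simp [Amat, Matrix.mul_apply, Fin.sum_univ_two]

lemma PC_gen2_iff (a b c : ℝ) : PC a (-b) (-c) ↔ PC a b c := by
  constructor <;> rintro ⟨h1, h2, h3⟩ <;>
    exact ⟨by linear_combination -h1, by linear_combination h2, by linear_combination -h3⟩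

lemma PC_gen1_iff (a b c : ℝ) :
    PC (-a/2 - Real.sqrt 3*(b+c)/4) (-a*Real.sqrt 3/2 - b/4 + 3*c/4)
      (-a*Real.sqrt 3/2 + 3*b/4 - c/4) ↔ PC a b c := by
  have hs := hs3
  set s := Real.sqrt 3 with hsdef
  constructor
  · rintro ⟨h1, h2, h3⟩
    refine ⟨?_, ?_, ?_⟩
    · linear_combination (-5/8)*h1 + (2*s)*h2 + (-3/8)*h3 +
        ((-1/8)*c^3 + (3/4)*b*c^2 + (7/8)*b^2*c + (-5/8)*a*c^2*s + (-3/4)*a*b*c*s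
          + (-1/8)*a*b^2*s + (-4)*a^2*c + (-1/2)*a^2*b + (1/2)*a^3*s)*hs
    · linear_combination (s/32)*h1 + (-1/2)*h2 + (-s/32)*h3 +
        ((1/64)*c^3*s + (1/64)*b*c^2*s + (-1/64)*b^2*c*s + (-1/64)*b^3*s + (5/16)*a*c^2
          + (-1/4)*a*b*c + (-1/16)*a*b^2 + (-1/16)*a^2*c*s + (1/16)*a^2*b*s)*hs
    · linear_combination (-9/8)*h1 + (-6*s)*h2 + (1/8)*h3 +
        ((1/8)*c^3 + (-1)*b*c^2 + (5/8)*b^2*c + (7/4)*b^3 + (3/8)*a*c^2*s + (-3/4)*a*b*c*s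
          + (-9/8)*a*b^2*s + (-1)*a^2*c + (-7/2)*a^2*b + (1/2)*a^3*s)*hs
  · rintro ⟨h1, h2, h3⟩
    refine ⟨?_, ?_, ?_⟩
    · linear_combination (-5/8)*h1 + (2*s)*h2 + (-3/8)*h3 +
        ((-3/16)*c^3 + (3/16)*b*c^2 + (15/16)*b^2*c + (9/16)*b^3 + (-3/8)*a*c^2*s
          + (-3/4)*a*b*c*s + (-3/8)*a*b^2*s + (-11/4)*a^2*c + (-7/4)*a^2*b + (1/2)*a^3*s)*hs
    · linear_combination (s/32)*h1 + (-1/2)*h2 + (-s/32)*h3 +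
        ((1/8)*a*c^2 + (-1/8)*a*b^2)*hs
    · linear_combination (-9/8)*h1 + (-6*s)*h2 + (1/8)*h3 +
        ((5/16)*c^3 + (11/16)*b*c^2 + (7/16)*b^2*c + (1/16)*b^3 + (-3/8)*a*c^2*s
          + (-3/4)*a*b*c*s + (-3/8)*a*b^2*s + (-19/4)*a^2*c + (1/4)*a^2*b + (1/2)*a^3*s)*hs

/-- The key predicate for the closure induction. -/
def Good (k : GL (Fin 2) ℝ) : Prop :=
  ∀ a b c : ℝ, ∃ x y z : ℝ,
    (k : Matrix (Fin 2) (Fin 2) ℝ) * Amat a b c *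
        ((k⁻¹ : GL (Fin 2) ℝ) : Matrix (Fin 2) (Fin 2) ℝ) = Amat x y z ∧
      (PC x y z ↔ PC a b c)

lemma good_one : Good 1 := by
  intro a b c
  refine ⟨a, b, c, ?_, Iff.rfl⟩
  rw [inv_one]
  show (1 : (Matrix (Fin 2) (Fin 2) ℝ)ˣ).val * Amat a b c * (1 : (Matrix (Fin 2) (Fin 2) ℝ)ˣ).val = _
  rw [Units.val_one, one_mul, mul_one]

lemma good_mul {k₁ k₂ : GL (Fin 2) ℝ} (h₁ : Good k₁) (h₂ : Good k₂) : Good (k₁ * k₂) := by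
  intro a b c
  obtain ⟨x, y, z, hx, hiff⟩ := h₂ a b c
  obtain ⟨x', y', z', hx', hiff'⟩ := h₁ x y z
  refine ⟨x', y', z', ?_, hiff'.trans hiff⟩
  have : ((k₁ * k₂ : GL (Fin 2) ℝ) : Matrix (Fin 2) (Fin 2) ℝ) * Amat a b c *
      (((k₁ * k₂)⁻¹ : GL (Fin 2) ℝ) : Matrix (Fin 2) (Fin 2) ℝ)
      = (k₁ : Matrix (Fin 2) (Fin 2) ℝ) * ((k₂ : Matrix (Fin 2) (Fin 2) ℝ) * Amat a b c *
        ((k₂⁻¹ : GL (Fin 2) ℝ) : Matrix (Fin 2) (Fin 2) ℝ)) *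
        ((k₁⁻¹ : GL (Fin 2) ℝ) : Matrix (Fin 2) (Fin 2) ℝ) := by
    rw [mul_inv_rev, Units.val_mul, Units.val_mul]
    noncomm_ring
  rw [this, hx, hx']

lemma good_inv {k : GL (Fin 2) ℝ} (hk : Good k) : Good k⁻¹ := by
  intro a b c
  set M : Matrix (Fin 2) (Fin 2) ℝ :=
    ((k⁻¹ : GL (Fin 2) ℝ) : Matrix (Fin 2) (Fin 2) ℝ) * Amat a b c *
      (((k⁻¹)⁻¹ : GL (Fin 2) ℝ) : Matrix (Fin 2) (Fin 2) ℝ) with hM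
  have hMk : M = ((k⁻¹ : GL (Fin 2) ℝ) : Matrix (Fin 2) (Fin 2) ℝ) * Amat a b c *
      (k : Matrix (Fin 2) (Fin 2) ℝ) := by rw [hM, inv_inv]
  have htr : M.trace = (Amat a b c).trace := by
    rw [hMk, Matrix.trace_mul_cycle, ← Units.val_mul, mul_inv_cancel, Units.val_one, one_mul]
  have htr2 : M 1 1 = - M 0 0 := by
    have h0 : (Amat a b c).trace = 0 := by
      simp [Amat, Matrix.trace_fin_two]
    rw [h0, Matrix.trace_fin_two] at htr
    linarith
  have hMA : M = Amat (M 0 0) (M 0 1) (M 1 0) := by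
    ext i j
    fin_cases i <;> fin_cases j <;> simp [Amat]
    exact htr2
  obtain ⟨x', y', z', hx', hiff'⟩ := hk (M 0 0) (M 0 1) (M 1 0)
  have hback : (k : Matrix (Fin 2) (Fin 2) ℝ) * M *
      ((k⁻¹ : GL (Fin 2) ℝ) : Matrix (Fin 2) (Fin 2) ℝ) = Amat a b c := by
    rw [hMk]
    have h1 : (k : Matrix (Fin 2) (Fin 2) ℝ) * ((k⁻¹ : GL (Fin 2) ℝ) : Matrix (Fin 2) (Fin 2) ℝ)
        = 1 := by rw [← Units.val_mul, mul_inv_cancel, Units.val_one]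
    calc (k : Matrix (Fin 2) (Fin 2) ℝ) *
          (((k⁻¹ : GL (Fin 2) ℝ) : Matrix (Fin 2) (Fin 2) ℝ) * Amat a b c *
            (k : Matrix (Fin 2) (Fin 2) ℝ)) * ((k⁻¹ : GL (Fin 2) ℝ) : Matrix (Fin 2) (Fin 2) ℝ)
        = ((k : Matrix (Fin 2) (Fin 2) ℝ) * ((k⁻¹ : GL (Fin 2) ℝ) : Matrix (Fin 2) (Fin 2) ℝ)) *
            Amat a b c *
            ((k : Matrix (Fin 2) (Fin 2) ℝ) * ((k⁻¹ : GL (Fin 2) ℝ) : Matrix (Fin 2) (Fin 2) ℝ))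
          := by noncomm_ring
      _ = Amat a b c := by rw [h1, one_mul, mul_one]
  have hAeq : Amat x' y' z' = Amat a b c := by rw [← hx', ← hMA, hback]
  have hx'a : x' = a := congr_fun (congr_fun hAeq 0) 0
  have hy'b : y' = b := congr_fun (congr_fun hAeq 0) 1
  have hz'c : z' = c := congr_fun (congr_fun hAeq 1) 0
  refine ⟨M 0 0, M 0 1, M 1 0, hMA, ?_⟩
  rw [← hx'a, ← hy'b, ← hz'c]
  exact hiff'.symm

lemma good_gen1 : Good gen1 := by
  intro a b c
  exact ⟨_, _, _, conj_gen1 a b c, PC_gen1_iff a b c⟩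

lemma good_gen2 : Good gen2 := by
  intro a b c
  refine ⟨a, -b, -c, conj_gen2 a b c, PC_gen2_iff a b c⟩

lemma good_of_mem {k : GL (Fin 2) ℝ} (hk : k ∈ Sigma3) : Good k := by
  refine Subgroup.closure_induction (p := fun g _ => Good g) ?_ good_one
    (fun x y _ _ hx hy => good_mul hx hy) (fun x _ hx => good_inv hx) hk
  rintro x (rfl | rfl)
  · exact good_gen1
  · exact good_gen2


lemma conjGL_mul (k₁ k₂ : GL (Fin 2) ℝ) (M : Matrix (Fin 2) (Fin 2) ℝ) :
    ((k₁ * k₂ : GL (Fin 2) ℝ) : Matrix (Fin 2) (Fin 2) ℝ) * M *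
        (((k₁ * k₂)⁻¹ : GL (Fin 2) ℝ) : Matrix (Fin 2) (Fin 2) ℝ)
      = (k₁ : Matrix (Fin 2) (Fin 2) ℝ) * ((k₂ : Matrix (Fin 2) (Fin 2) ℝ) * M *
          ((k₂⁻¹ : GL (Fin 2) ℝ) : Matrix (Fin 2) (Fin 2) ℝ)) *
          ((k₁⁻¹ : GL (Fin 2) ℝ) : Matrix (Fin 2) (Fin 2) ℝ) := by
  rw [mul_inv_rev, Units.val_mul, Units.val_mul]
  noncomm_ring

lemma cond1_to_PC (a b c : ℝ) (H : ∀ l ∈ Pabc a b c, Xabc a b c l ∈ Pabc a b c) :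
    PC a b c := by
  have m1 : (![2*b-c, 0, -3*c, 0] : Fin 4 → ℝ) ∈ Pabc a b c := by
    refine ⟨rfl, ?_⟩
    show 3*c*(2*b-c) + 4*a*0 + (2*b-c)*(-3*c) = 0
    ring
  have m2 : (![-4*a, 3*c, 0, 3*c] : Fin 4 → ℝ) ∈ Pabc a b c := by
    refine ⟨rfl, ?_⟩
    show 3*c*(-4*a) + 4*a*(3*c) + (2*b-c)*0 = 0
    ring
  have m3 : (![0, 2*b-c, -4*a, 2*b-c] : Fin 4 → ℝ) ∈ Pabc a b c := by
    refine ⟨rfl, ?_⟩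
    show 3*c*0 + 4*a*(2*b-c) + (2*b-c)*(-4*a) = 0
    ring
  have e1 := (H _ m1).2
  have e2 := (H _ m2).2
  have e3 := (H _ m3).2
  have E1 : 3*c*(3*a*(2*b-c) + b*0) + 4*a*(3*c*(2*b-c) + a*0 + 2*b*(-3*c))
      + (2*b-c)*(2*c*0 - a*(-3*c) + 3*b*0) = 0 := e1
  have E2 : 3*c*(3*a*(-4*a) + b*(3*c)) + 4*a*(3*c*(-4*a) + a*(3*c) + 2*b*0)
      + (2*b-c)*(2*c*(3*c) - a*0 + 3*b*(3*c)) = 0 := e2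
  have E3 : 3*c*(3*a*0 + b*(2*b-c)) + 4*a*(3*c*0 + a*(2*b-c) + 2*b*(-4*a))
      + (2*b-c)*(2*c*(2*b-c) - a*(-4*a) + 3*b*(2*b-c)) = 0 := e3
  refine ⟨?_, ?_, ?_⟩
  · linear_combination (-1/6) * E2
  · linear_combination (1/24) * E1
  · linear_combination (-1/2) * E3

lemma classify (a b c : ℝ) (h : ¬(a = 0 ∧ b = 0 ∧ c = 0)) (hp : PC a b c) :
    (b = 0 ∧ c = 0 ∧ a ≠ 0) ∨ (c = 0 ∧ 3*b^2 = 4*a^2 ∧ b ≠ 0 ∧ a ≠ 0) ∨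
    (a = 0 ∧ c = 3*b ∧ b ≠ 0) ∨ (a = 0 ∧ c = -b ∧ b ≠ 0) ∨
    (b = c ∧ c^2 = 3*a^2 ∧ a ≠ 0) := by
  obtain ⟨h1, h2, h3⟩ := hp
  by_cases hc : c = 0
  · subst hc
    by_cases hb : b = 0
    · exact Or.inl ⟨hb, rfl, fun ha => h ⟨ha, hb, rfl⟩⟩
    · refine Or.inr (Or.inl ⟨rfl, ?_, hb, ?_⟩)
      · have hb3 : b * (8*a^2 - 6*b^2) = 0 := by linear_combination h3
        have h5 := (mul_eq_zero.mp hb3).resolve_left hb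
        linarith
      · intro ha
        apply hb
        have hb3 : b * (8*a^2 - 6*b^2) = 0 := by linear_combination h3
        have h5 := (mul_eq_zero.mp hb3).resolve_left hb
        nlinarith [sq_nonneg b]
  · rcases mul_eq_zero.mp h2 with h4 | h4
    · have ha : a = 0 := by
        rcases mul_eq_zero.mp h4 with ha | hc'
        · exact ha
        · exact absurd hc' hc
      subst ha
      have h5 : (c - 3*b) * (c + b) = 0 := by
        have h6 := (mul_eq_zero.mp h1).resolve_left hc
        linear_combination h6
      rcases mul_eq_zero.mp h5 with h6 | h6
      · refine Or.inr (Or.inr (Or.inl ⟨rfl, by linarith, ?_⟩))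
        intro hb; apply hc; subst hb; linarith
      · refine Or.inr (Or.inr (Or.inr (Or.inl ⟨rfl, by linarith, ?_⟩)))
        intro hb; apply hc; subst hb; linarith
    · have hbc : b = c := by linarith
      subst hbc
      have h6 := (mul_eq_zero.mp h1).resolve_left hc
      have h5 : b^2 = 3*a^2 := by linear_combination (-1/4) * h6
      refine Or.inr (Or.inr (Or.inr (Or.inr ⟨rfl, h5, ?_⟩)))
      intro ha
      apply hc
      rw [ha] at h5
      have hc2 : b^2 = 0 := by linarith [h5, sq_nonneg (0:ℝ)]
      exact sq_eq_zero_iff.mp hc2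

lemma Xmem1 (a b c : ℝ) (l : Fin 4 → ℝ) (h13 : l 1 = l 3)
    (hc : 3*c*l 0 + 4*a*l 1 + (2*b-c)*l 2 = 0) :
    Xabc a b c l 1 = Xabc a b c l 3 := by
  show 3*c*l 0 + a*l 1 + 2*b*l 2 = c*l 2 - 3*a*l 3
  linear_combination hc - 3*a*h13

lemma PC_to_cond1 (a b c : ℝ) (h : ¬(a = 0 ∧ b = 0 ∧ c = 0)) (hp : PC a b c) :
    ∀ l ∈ Pabc a b c, Xabc a b c l ∈ Pabc a b c := by
  intro l hl
  obtain ⟨h13, hc⟩ := hl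
  refine ⟨Xmem1 a b c l h13 hc, ?_⟩
  show 3*c*(3*a*l 0 + b*l 1) + 4*a*(3*c*l 0 + a*l 1 + 2*b*l 2)
      + (2*b-c)*(2*c*l 1 - a*l 2 + 3*b*l 3) = 0
  rcases classify a b c h hp with ⟨hb, hcc, _⟩ | ⟨hcc, h4, _, _⟩ |
    ⟨ha, hcc, _⟩ | ⟨ha, hcc, _⟩ | ⟨hbc, h5, _⟩
  · subst hb; subst hcc; linear_combination a * hc
  · subst hcc; linear_combination 3*a*hc + 2*(l 3)*h4 - 8*a^2*h13
  · subst ha; subst hcc; linear_combination 3*b^2*h13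
  · subst ha; subst hcc; linear_combination -9*b^2*h13
  · subst hbc; linear_combination 7*a*hc + (5*(l 1)+3*(l 3))*h5 - 9*a^2*h13


lemma g1_mem : gen1 ∈ Sigma3 := Subgroup.subset_closure (Set.mem_insert _ _)
lemma g2_mem : gen2 ∈ Sigma3 := Subgroup.subset_closure (Set.mem_insert_of_mem _ rfl)

lemma one_conj (M : Matrix (Fin 2) (Fin 2) ℝ) :
    ((1 : GL (Fin 2) ℝ) : Matrix (Fin 2) (Fin 2) ℝ) * M *
      (((1 : GL (Fin 2) ℝ)⁻¹ : GL (Fin 2) ℝ) : Matrix (Fin 2) (Fin 2) ℝ) = M := by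
  rw [inv_one, Units.val_one, one_mul, mul_one]

lemma sqrt3_ne : Real.sqrt 3 ≠ 0 := by positivity

lemma PC_to_rhs (a b c : ℝ) (h : ¬(a = 0 ∧ b = 0 ∧ c = 0)) (hp : PC a b c) :
    ∃ k ∈ Sigma3, ∃ r : ℝ, r ≠ 0 ∧
      ((k : Matrix (Fin 2) (Fin 2) ℝ) * Amat a b c * ((k⁻¹ : GL (Fin 2) ℝ) :
          Matrix (Fin 2) (Fin 2) ℝ) = r • Amat 1 0 0 ∨
        (k : Matrix (Fin 2) (Fin 2) ℝ) * Amat a b c * ((k⁻¹ : GL (Fin 2) ℝ) :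
          Matrix (Fin 2) (Fin 2) ℝ) = r • Amat 0 1 3 ∨
        (k : Matrix (Fin 2) (Fin 2) ℝ) * Amat a b c * ((k⁻¹ : GL (Fin 2) ℝ) :
          Matrix (Fin 2) (Fin 2) ℝ) = r • Amat 0 1 (-1)) := by
  have hs := hs3
  set s := Real.sqrt 3 with hsdef
  rcases classify a b c h hp with ⟨hb, hcc, ha⟩ | ⟨hcc, h4, hb, ha⟩ |
    ⟨ha, hcc, hb⟩ | ⟨ha, hcc, hb⟩ | ⟨hbc, h5, ha⟩
  · -- b = 0, c = 0
    subst hb; subst hcc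
    refine ⟨1, Subgroup.one_mem _, a, ha, Or.inl ?_⟩
    rw [one_conj]
    ext i j
    fin_cases i <;> fin_cases j <;> simp [Amat]
  · -- c = 0, 3b² = 4a²
    subst hcc
    have hfac : (s*b - 2*a) * (s*b + 2*a) = 0 := by linear_combination h4 + b^2*hs
    have hr : -a*s/3 ≠ 0 := by
      simp only [ne_eq, div_eq_zero_iff, mul_eq_zero, neg_eq_zero]
      push_neg
      exact ⟨⟨ha, sqrt3_ne⟩, by norm_num⟩
    rcases mul_eq_zero.mp hfac with hsb | hsb
    · -- s*b = 2*a : k = gen1 * gen2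
      have hsb' : s*b = 2*a := by linarith
      refine ⟨gen1 * gen2, mul_mem g1_mem g2_mem, -a*s/3, hr, Or.inr (Or.inl ?_)⟩
      rw [conjGL_mul, conj_gen2, conj_gen1]
      ext i j
      fin_cases i <;> fin_cases j <;> simp [Amat]
      · linear_combination (1/4)*hsb'
      · linear_combination (s/12)*hsb' - (b/12)*hs
      · linear_combination (-s/4)*hsb' + (b/4)*hs
      · linear_combination (-1/4)*hsb'
    · -- s*b = -2*a : k = gen1
      have hsb' : s*b = -2*a := by linarith
      refine ⟨gen1, g1_mem, -a*s/3, hr, Or.inr (Or.inl ?_)⟩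
      rw [conj_gen1]
      ext i j
      fin_cases i <;> fin_cases j <;> simp [Amat]
      · linear_combination (-1/4)*hsb'
      · linear_combination (-s/12)*hsb' + (b/12)*hs
      · linear_combination (s/4)*hsb' - (b/4)*hs
      · linear_combination (1/4)*hsb'
  · -- a = 0, c = 3b
    subst ha; subst hcc
    exact ⟨1, Subgroup.one_mem _, b, hb, Or.inr (Or.inl (by
      rw [one_conj]
      ext i j
      fin_cases i <;> fin_cases j <;> simp [Amat] <;> ring))⟩
  · -- a = 0, c = -b
    subst ha; subst hcc
    exact ⟨1, Subgroup.one_mem _, b, hb, Or.inr (Or.inr (by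
      rw [one_conj]
      ext i j
      fin_cases i <;> fin_cases j <;> simp [Amat] <;> ring))⟩
  · -- b = c, c² = 3a²  (here c has been replaced by b by classify's form)
    have hfac : (c - s*a) * (c + s*a) = 0 := by linear_combination h5 - a^2*hs
    have hr : (-2*a : ℝ) ≠ 0 := by
      simp only [ne_eq, mul_eq_zero]
      push_neg
      exact ⟨by norm_num, ha⟩
    subst hbc
    rcases mul_eq_zero.mp hfac with hcs | hcs
    · -- c = s*a : k = gen1
      have hcs' : b = s*a := by linarith
      refine ⟨gen1, g1_mem, -2*a, hr, Or.inl ?_⟩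
      rw [conj_gen1]
      ext i j
      fin_cases i <;> fin_cases j <;> simp [Amat]
      · linear_combination (-s/2)*hcs' - (a/2)*hs
      · linear_combination (1/2)*hcs'
      · linear_combination (1/2)*hcs'
      · linear_combination (s/2)*hcs' + (a/2)*hs
    · -- c = -s*a : k = gen1 * gen2
      have hcs' : b = -(s*a) := by linarith
      refine ⟨gen1 * gen2, mul_mem g1_mem g2_mem, -2*a, hr, Or.inl ?_⟩
      rw [conjGL_mul, conj_gen2, conj_gen1]
      ext i j
      fin_cases i <;> fin_cases j <;> simp [Amat]
      · linear_combination (s/2)*hcs' - (a/2)*hs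
      · linear_combination (-1/2)*hcs'
      · linear_combination (-1/2)*hcs'
      · linear_combination (-s/2)*hcs' + (a/2)*hs

lemma rhs_to_PC (a b c : ℝ)
    (hrhs : ∃ k ∈ Sigma3, ∃ r : ℝ, r ≠ 0 ∧
      ((k : Matrix (Fin 2) (Fin 2) ℝ) * Amat a b c * ((k⁻¹ : GL (Fin 2) ℝ) :
          Matrix (Fin 2) (Fin 2) ℝ) = r • Amat 1 0 0 ∨
        (k : Matrix (Fin 2) (Fin 2) ℝ) * Amat a b c * ((k⁻¹ : GL (Fin 2) ℝ) :
          Matrix (Fin 2) (Fin 2) ℝ) = r • Amat 0 1 3 ∨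
        (k : Matrix (Fin 2) (Fin 2) ℝ) * Amat a b c * ((k⁻¹ : GL (Fin 2) ℝ) :
          Matrix (Fin 2) (Fin 2) ℝ) = r • Amat 0 1 (-1))) :
    PC a b c := by
  obtain ⟨k, hk, r, hr, hcase⟩ := hrhs
  obtain ⟨x, y, z, heq, hiff⟩ := good_of_mem hk a b c
  apply hiff.mp
  rcases hcase with hE | hE | hE
  all_goals {
    have hA : Amat x y z = _ := heq.symm.trans hE
    have h00 := congr_fun (congr_fun hA 0) 0
    have h01 := congr_fun (congr_fun hA 0) 1
    have h10 := congr_fun (congr_fun hA 1) 0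
    simp [Amat] at h00 h01 h10
    rw [h00, h01, h10]
    refine ⟨by ring, by ring, by ring⟩ }


theorem stmt13 (a b c : ℝ) (h : ¬(a = 0 ∧ b = 0 ∧ c = 0)) :
    ((∀ l ∈ Pabc a b c, Xabc a b c l ∈ Pabc a b c) ↔
      ∃ k ∈ Sigma3, ∃ r : ℝ, r ≠ 0 ∧
        ((k : Matrix (Fin 2) (Fin 2) ℝ) * Amat a b c * ((k⁻¹ : GL (Fin 2) ℝ) :
            Matrix (Fin 2) (Fin 2) ℝ) = r • Amat 1 0 0 ∨
          (k : Matrix (Fin 2) (Fin 2) ℝ) * Amat a b c * ((k⁻¹ : GL (Fin 2) ℝ) :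
            Matrix (Fin 2) (Fin 2) ℝ) = r • Amat 0 1 3 ∨
          (k : Matrix (Fin 2) (Fin 2) ℝ) * Amat a b c * ((k⁻¹ : GL (Fin 2) ℝ) :
            Matrix (Fin 2) (Fin 2) ℝ) = r • Amat 0 1 (-1))) ∧
    Pabc 1 0 0 = {l | l 1 = 0 ∧ l 3 = 0} ∧
    Pabc 0 1 3 = {l | 9 * l 0 = l 2 ∧ l 1 = l 3} ∧
    Pabc 0 1 (-1) = {l | l 0 = l 2 ∧ l 1 = l 3} := by
  refine ⟨⟨fun H => PC_to_rhs a b c h (cond1_to_PC a b c H),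
      fun H => PC_to_cond1 a b c h (rhs_to_PC a b c H)⟩, ?_, ?_, ?_⟩
  · ext l
    show (l 1 = l 3 ∧ 3*0*l 0 + 4*1*l 1 + (2*0-0)*l 2 = 0) ↔ (l 1 = 0 ∧ l 3 = 0)
    constructor
    · rintro ⟨h1, h2⟩
      constructor <;> linarith
    · rintro ⟨h1, h2⟩
      refine ⟨by rw [h1, h2], by rw [h1]; ring⟩
  · ext l
    show (l 1 = l 3 ∧ 3*3*l 0 + 4*0*l 1 + (2*1-3)*l 2 = 0) ↔ (9 * l 0 = l 2 ∧ l 1 = l 3)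
    constructor
    · rintro ⟨h1, h2⟩
      exact ⟨by linarith, h1⟩
    · rintro ⟨h1, h2⟩
      exact ⟨h2, by linarith⟩
  · ext l
    show (l 1 = l 3 ∧ 3*(-1)*l 0 + 4*0*l 1 + (2*1-(-1))*l 2 = 0) ↔ (l 0 = l 2 ∧ l 1 = l 3)
    constructor
    · rintro ⟨h1, h2⟩
      exact ⟨by linarith, h1⟩
    · rintro ⟨h1, h2⟩
      exact ⟨h2, by linarith⟩
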